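/- Similarly for the group action: with z = [a₁,…,aₙ] ∈ Z and g ∈ G, ‖g·μ(z) − μ(g·z)‖₁ ≤ 2·|g|_G·|z|₀/(|z|₀² + |z|₁), and hence ‖g·μ(z) − μ(g·z)‖₁ → 0 as z → ∞. -/

import Mathlib

open Filter Topology

/-- The weight function ω(z) = Σ_{a ∈ z} (|z|₀ + |a|_X)·δ_a ∈ ℓ¹(X). -/
def omegaWt {X : Type*} [DecidableEq X] (h : X → ℝ) (z : Finset X) : X → ℝ :=
  fun x => if x ∈ z then (z.card : ℝ) + h x else 0

/-- μ(z) := ω(z)/‖ω(z)‖₁, using ‖ω(z)‖₁ = |z|₀² + |z|₁. -/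
noncomputable def muWt {X : Type*} [DecidableEq X] (h : X → ℝ) (z : Finset X) : X → ℝ :=
  fun x => omegaWt h z x / ((z.card : ℝ) ^ 2 + ∑ a ∈ z, h a)

lemma aux_div (p q S S' : ℝ) (hS : 0 < S) (hS' : 0 < S') (hq : 0 ≤ q) :
    |p / S - q / S'| ≤ |p - q| / S + q * |S' - S| / (S * S') := by
  have h1 : p / S - q / S' = (p - q) / S + q * (S' - S) / (S * S') := by
    field_simp; ring
  rw [h1]
  calc |(p - q) / S + q * (S' - S) / (S * S')|
      ≤ |(p - q) / S| + |q * (S' - S) / (S * S')| := abs_add_le _ _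
    _ = |p - q| / S + q * |S' - S| / (S * S') := by
        rw [abs_div, abs_div, abs_mul, abs_mul, abs_of_pos hS, abs_of_pos hS',
          abs_of_nonneg hq]

lemma sqrt_tendsto : Filter.Tendsto Real.sqrt Filter.atTop Filter.atTop := by
  refine Filter.tendsto_atTop_atTop.mpr fun b => ⟨(max b 0) ^ 2, fun a ha => ?_⟩
  calc b ≤ max b 0 := le_max_left b 0
    _ = Real.sqrt ((max b 0) ^ 2) := (Real.sqrt_sq (le_max_right b 0)).symm
    _ ≤ Real.sqrt a := Real.sqrt_le_sqrt ha

lemma muWt_bound {X : Type*} [DecidableEq X] {G : Type*} [Group G] [MulAction G X]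
    (h : X → ℝ) (h0 : ∀ a, 0 ≤ h a)
    (L : G → ℝ) (hL0 : ∀ g, 0 ≤ L g) (hLsym : ∀ g, L g⁻¹ = L g)
    (hcompat : ∀ (g : G) (x : X), h (g • x) ≤ L g + h x) (g : G)
    (z : Finset X) (hz : z.Nonempty) :
    ∑' y : X, |muWt h z (g⁻¹ • y) - muWt h (z.image (g • ·)) y|
      ≤ 2 * L g * (z.card : ℝ) / ((z.card : ℝ) ^ 2 + ∑ a ∈ z, h a) := by
  classical
  set w := z.image (g • ·) with hw
  have hinj : Function.Injective (g • · : X → X) := MulAction.injective g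
  have hcard : w.card = z.card := Finset.card_image_of_injective z hinj
  have hn : (1:ℝ) ≤ (z.card : ℝ) := by exact_mod_cast hz.card_pos
  set n : ℝ := (z.card : ℝ) with hndef
  set S : ℝ := n ^ 2 + ∑ a ∈ z, h a with hSdef
  set S' : ℝ := n ^ 2 + ∑ a ∈ z, h (g • a) with hS'def
  have hsum1 : 0 ≤ ∑ a ∈ z, h a := Finset.sum_nonneg fun a _ => h0 a
  have hsum2 : 0 ≤ ∑ a ∈ z, h (g • a) := Finset.sum_nonneg fun a _ => h0 (g • a)
  have hSpos : 0 < S := by nlinarith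
  have hS'pos : 0 < S' := by nlinarith
  have hmem : ∀ y : X, y ∈ w ↔ g⁻¹ • y ∈ z := by
    intro y
    constructor
    · rintro hy
      rcases Finset.mem_image.mp hy with ⟨a, ha, rfl⟩
      simpa using ha
    · intro hy
      exact Finset.mem_image.mpr ⟨g⁻¹ • y, hy, by simp⟩
  have hsumw : ∑ a ∈ w, h a = ∑ a ∈ z, h (g • a) :=
    Finset.sum_image fun a _ b _ hab => hinj hab
  have hmu_w : ∀ y : X, muWt h w y = omegaWt h w y / S' := by
    intro y; simp only [muWt, hcard, hsumw, hS'def, hndef]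
  have hzero : ∀ y ∉ w, |muWt h z (g⁻¹ • y) - muWt h w y| = 0 := by
    intro y hy
    have h1 : omegaWt h z (g⁻¹ • y) = 0 := if_neg (fun hc => hy ((hmem y).mpr hc))
    have h2 : omegaWt h w y = 0 := if_neg hy
    simp [muWt, h1, hmu_w, h2]
  have ht : ∑' y : X, |muWt h z (g⁻¹ • y) - muWt h w y| = ∑ y ∈ w, |muWt h z (g⁻¹ • y) - muWt h w y| :=
    tsum_eq_sum hzero
  rw [ht]
  have hsi : ∑ y ∈ w, |muWt h z (g⁻¹ • y) - muWt h w y|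
      = ∑ a ∈ z, |muWt h z (g⁻¹ • (g • a)) - muWt h w (g • a)| :=
    Finset.sum_image fun a _ b _ hab => hinj hab
  rw [hw] at hsi ⊢
  rw [hsi]
  have hLg : |(∑ a ∈ z, h (g • a)) - (∑ a ∈ z, h a)| ≤ n * L g := by
    rw [← Finset.sum_sub_distrib]
    calc |∑ a ∈ z, (h (g • a) - h a)| ≤ ∑ a ∈ z, |h (g • a) - h a| :=
          Finset.abs_sum_le_sum_abs _ _
      _ ≤ ∑ a ∈ z, L g := by
          apply Finset.sum_le_sum
          intro a ha
          rw [abs_sub_le_iff]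
          constructor
          · linarith [hcompat g a]
          · have := hcompat g⁻¹ (g • a)
            rw [inv_smul_smul, hLsym] at this
            linarith
      _ = n * L g := by rw [Finset.sum_const, nsmul_eq_mul]
  have hterm : ∀ a ∈ z, |muWt h z (g⁻¹ • (g • a)) - muWt h w (g • a)|
      ≤ L g / S + (n + h (g • a)) * (n * L g) / (S * S') := by
    intro a ha
    have hga : g • a ∈ w := Finset.mem_image.mpr ⟨a, ha, rfl⟩
    have e1 : muWt h z (g⁻¹ • (g • a)) = (n + h a) / S := by
      rw [inv_smul_smul]
      simp [muWt, omegaWt, ha, hSdef, hndef]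
    have e2 : muWt h w (g • a) = (n + h (g • a)) / S' := by
      rw [hmu_w]
      simp [omegaWt, hga, hcard, hndef]
    rw [e1, e2]
    have := aux_div (n + h a) (n + h (g • a)) S S' hSpos hS'pos (by nlinarith [h0 (g • a)])
    refine this.trans ?_
    have hpq : |(n + h a) - (n + h (g • a))| ≤ L g := by
      have h1 : h (g • a) - h a ≤ L g := by linarith [hcompat g a]
      have h2 : h a - h (g • a) ≤ L g := by
        have := hcompat g⁻¹ (g • a)
        rw [inv_smul_smul, hLsym] at this
        linarith
      rw [abs_sub_le_iff]
      constructor <;> [linarith; linarith]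
    have hSS : |S' - S| ≤ n * L g := by
      have : S' - S = (∑ a ∈ z, h (g • a)) - (∑ a ∈ z, h a) := by
        simp only [hSdef, hS'def]; ring
      rw [this]; exact hLg
    have hq0 : (0:ℝ) ≤ n + h (g • a) := by nlinarith [h0 (g • a)]
    exact add_le_add ((div_le_div_iff_of_pos_right hSpos).mpr hpq)
      ((div_le_div_iff_of_pos_right (mul_pos hSpos hS'pos)).mpr (mul_le_mul_of_nonneg_left hSS hq0))
  calc ∑ a ∈ z, |muWt h z (g⁻¹ • (g • a)) - muWt h w (g • a)|
      ≤ ∑ a ∈ z, (L g / S + (n + h (g • a)) * (n * L g) / (S * S')) :=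
        Finset.sum_le_sum hterm
    _ = n * (L g / S) + S' * (n * L g) / (S * S') := by
        rw [Finset.sum_add_distrib, Finset.sum_const, nsmul_eq_mul]
        rw [← Finset.sum_div, ← Finset.sum_mul]
        congr 2
        rw [Finset.sum_add_distrib, Finset.sum_const, nsmul_eq_mul]
        simp [hS'def, sq]
        exact Or.inl (Or.inl hndef.symm)
    _ = 2 * L g * n / S := by field_simp; ring

/-- ‖g·μ(z) − μ(g·z)‖₁ ≤ 2·|g|_G·|z|₀/(|z|₀² + |z|₁), where g·μ(z) is the pushforward
probability measure (y ↦ μ(z)(g⁻¹·y)); hence it tends to 0 as z → ∞. -/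
theorem stmt9 (X : Type*) [DecidableEq X] (G : Type*) [Group G] [MulAction G X]
    (h : X → ℝ) (h0 : ∀ a, 0 ≤ h a)
    (L : G → ℝ) (hL0 : ∀ g, 0 ≤ L g) (hLsym : ∀ g, L g⁻¹ = L g)
    (hcompat : ∀ (g : G) (x : X), h (g • x) ≤ L g + h x) (g : G) :
    (∀ z : Finset X, z.Nonempty →
      ∑' y : X, |muWt h z (g⁻¹ • y) - muWt h (z.image (g • ·)) y|
        ≤ 2 * L g * (z.card : ℝ) / ((z.card : ℝ) ^ 2 + ∑ a ∈ z, h a)) ∧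
    (∀ zs : ℕ → Finset X, (∀ k, (zs k).Nonempty) →
      Tendsto (fun k => ((zs k).card : ℝ) + ∑ a ∈ zs k, h a) atTop atTop →
      Tendsto (fun k => ∑' y : X,
          |muWt h (zs k) (g⁻¹ • y) - muWt h ((zs k).image (g • ·)) y|) atTop (nhds 0)) := by
  refine ⟨muWt_bound h h0 L hL0 hLsym hcompat g, ?_⟩
  intro zs hne hT
  have hTpos : ∀ k, (0:ℝ) < ((zs k).card : ℝ) + ∑ a ∈ zs k, h a := by
    intro k
    have hn : (1:ℝ) ≤ ((zs k).card : ℝ) := by exact_mod_cast (hne k).card_pos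
    have := Finset.sum_nonneg (fun a (_ : a ∈ zs k) => h0 a)
    linarith
  have hupper : ∀ k, ∑' y : X,
      |muWt h (zs k) (g⁻¹ • y) - muWt h ((zs k).image (g • ·)) y|
      ≤ 2 * L g / Real.sqrt (((zs k).card : ℝ) + ∑ a ∈ zs k, h a) := by
    intro k
    refine (muWt_bound h h0 L hL0 hLsym hcompat g (zs k) (hne k)).trans ?_
    have hn : (1:ℝ) ≤ ((zs k).card : ℝ) := by exact_mod_cast (hne k).card_pos
    set n : ℝ := ((zs k).card : ℝ)
    set Sh : ℝ := ∑ a ∈ zs k, h a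
    have hSh0 : 0 ≤ Sh := Finset.sum_nonneg fun a _ => h0 a
    have hT0 : 0 < n + Sh := hTpos k
    have hrt : 0 < Real.sqrt (n + Sh) := Real.sqrt_pos.mpr hT0
    have hrt2 : Real.sqrt (n + Sh) ^ 2 = n + Sh := Real.sq_sqrt hT0.le
    have hS : 0 < n ^ 2 + Sh := by nlinarith
    have hn2 : n ≤ n ^ 2 := by nlinarith
    rw [div_le_div_iff₀ hS hrt]
    nlinarith [mul_nonneg (hL0 g) (sq_nonneg (n - Real.sqrt (n + Sh))),
      mul_nonneg (hL0 g) (sub_nonneg.mpr hn2), hrt2, hL0 g]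
  have hlower : ∀ k, (0:ℝ) ≤ ∑' y : X,
      |muWt h (zs k) (g⁻¹ • y) - muWt h ((zs k).image (g • ·)) y| := by
    intro k; exact tsum_nonneg fun y => abs_nonneg _
  refine squeeze_zero hlower hupper ?_
  have hsqrt : Tendsto (fun k => Real.sqrt (((zs k).card : ℝ) + ∑ a ∈ zs k, h a))
      atTop atTop := sqrt_tendsto.comp hT
  exact Tendsto.div_atTop tendsto_const_nhds hsqrt
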